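/- For each T ∈ [0,1), the function g_T : ρ ↦ (ρ/(1−T))^{1−T} · ((ρ+2)/(1+T))^{1+T} − 1 is strictly increasing on (0, +∞) with range (−1, +∞), and has a unique zero ρ(T) ∈ (0, +∞). Moreover, setting r(T) = 1 + ρ(T), the function T ↦ r(T) is strictly decreasing on [0,1), r(0) = √2, and r(T) → 1 as T → 1⁻ (in particular 1 < r(T) ≤ √2 for all T ∈ [0,1)). -/

import Mathlib

open Real Filter Set

/-- Log form of the function `g_T`. -/
noncomputable def statement9Phi (x T : ℝ) : ℝ :=
  (1 - T) * Real.log x + Real.negMulLog (1 - T) +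
    ((1 + T) * Real.log (x + 2) + Real.negMulLog (1 + T))

lemma statement9_exp (T x : ℝ) (h1 : T < 1) (hneg : -1 < T) (hx : 0 < x) :
    (x / (1 - T)) ^ (1 - T) * ((x + 2) / (1 + T)) ^ (1 + T) =
      Real.exp (statement9Phi x T) := by
  have hs : (0:ℝ) < 1 - T := by linarith
  have ht : (0:ℝ) < 1 + T := by linarith
  rw [Real.rpow_def_of_pos (div_pos hx hs), Real.rpow_def_of_pos (div_pos (by linarith) ht),
    ← Real.exp_add]
  congr 1
  rw [Real.log_div (ne_of_gt hx) (ne_of_gt hs), Real.log_div (by linarith) (ne_of_gt ht)]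
  simp only [statement9Phi, Real.negMulLog]
  ring

lemma statement9_mono (T : ℝ) (h0 : 0 ≤ T) (h1 : T < 1) :
    StrictMonoOn (fun x : ℝ => (x / (1 - T)) ^ (1 - T) * ((x + 2) / (1 + T)) ^ (1 + T) - 1)
      (Set.Ioi 0) := by
  have hs : (0:ℝ) < 1 - T := by linarith
  have ht : (0:ℝ) < 1 + T := by linarith
  intro a ha b hb hab
  simp only [Set.mem_Ioi] at ha hb
  have hA : (a / (1 - T)) ^ (1 - T) < (b / (1 - T)) ^ (1 - T) :=
    Real.rpow_lt_rpow (by positivity) (by gcongr) hs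
  have hB : ((a + 2) / (1 + T)) ^ (1 + T) < ((b + 2) / (1 + T)) ^ (1 + T) :=
    Real.rpow_lt_rpow (by positivity) (by gcongr) ht
  have := mul_lt_mul'' hA hB (by positivity) (by positivity)
  simpa using this

lemma statement9_cont (T : ℝ) (h0 : 0 ≤ T) (h1 : T < 1) :
    Continuous (fun x : ℝ => (x / (1 - T)) ^ (1 - T) * ((x + 2) / (1 + T)) ^ (1 + T) - 1) := by
  have hs : (0:ℝ) ≤ 1 - T := by linarith
  have ht : (0:ℝ) ≤ 1 + T := by linarith
  have c1 : Continuous fun x : ℝ => (x / (1 - T)) ^ (1 - T) :=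
    (Real.continuous_rpow_const hs).comp (continuous_id.div_const _)
  have c2 : Continuous fun x : ℝ => ((x + 2) / (1 + T)) ^ (1 + T) :=
    (Real.continuous_rpow_const ht).comp ((continuous_id.add continuous_const).div_const _)
  exact (c1.mul c2).sub continuous_const

/-- Monotonicity of `Φ` in `x`. -/
lemma statement9_phi_mono (T : ℝ) (h0 : 0 ≤ T) (h1 : T < 1) {x y : ℝ} (hx : 0 < x)
    (hxy : x ≤ y) : statement9Phi x T ≤ statement9Phi y T := by
  have l1 : Real.log x ≤ Real.log y := Real.log_le_log hx hxy
  have l2 : Real.log (x + 2) ≤ Real.log (y + 2) := Real.log_le_log (by linarith) (by linarith)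
  simp only [statement9Phi]
  nlinarith [l1, l2]

lemma statement9_phi_one (x : ℝ) (hx : 0 < x) : 0 < statement9Phi x 1 := by
  have : Real.log 2 < Real.log (x + 2) := Real.log_lt_log (by norm_num) (by linarith)
  simp only [statement9Phi, Real.negMulLog]
  norm_num
  nlinarith [this]

lemma statement9_concave (x : ℝ) (hx : 0 < x) :
    StrictConcaveOn ℝ (Set.Icc (-(1:ℝ)/2) 1) (fun T => statement9Phi x T) := by
  apply StrictAntiOn.strictConcaveOn_of_deriv (convex_Icc _ _)
  · apply Continuous.continuousOn
    simp only [statement9Phi]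
    fun_prop
  · rw [interior_Icc]
    have hderiv : ∀ T ∈ Set.Ioo (-(1:ℝ)/2) 1,
        deriv (fun T => statement9Phi x T) T =
          -Real.log x + (Real.log (1 - T) + 1) +
            (Real.log (x + 2) + (-Real.log (1 + T) - 1)) := by
      intro T hT
      obtain ⟨hTl, hTr⟩ := hT
      have hs : (1:ℝ) - T ≠ 0 := by intro h; linarith [h]
      have hs' : (1:ℝ) - T ≠ 0 := sub_ne_zero.mpr (by linarith)
      have ht' : (1:ℝ) + T ≠ 0 := by intro h; linarith [h]
      have hA : HasDerivAt (fun T : ℝ => 1 - T) (-1) T := by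
        simpa using (hasDerivAt_id T).const_sub 1
      have hB : HasDerivAt (fun T : ℝ => 1 + T) 1 T := by
        simpa using (hasDerivAt_id T).const_add 1
      have d1 : HasDerivAt (fun T : ℝ => (1 - T) * Real.log x) (-Real.log x) T := by
        simpa using hA.mul_const (Real.log x)
      have d2 : HasDerivAt (fun T : ℝ => Real.negMulLog (1 - T))
          (Real.log (1 - T) + 1) T := by
        have : HasDerivAt (fun T : ℝ => Real.negMulLog (1 - T)) ((-Real.log (1 - T) - 1) * -1) T :=
          (Real.hasDerivAt_negMulLog hs').comp T hA
        convert this using 1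
        ring
      have d3 : HasDerivAt (fun T : ℝ => (1 + T) * Real.log (x + 2))
          (Real.log (x + 2)) T := by
        simpa using hB.mul_const (Real.log (x + 2))
      have d4 : HasDerivAt (fun T : ℝ => Real.negMulLog (1 + T))
          (-Real.log (1 + T) - 1) T := by
        have : HasDerivAt (fun T : ℝ => Real.negMulLog (1 + T)) ((-Real.log (1 + T) - 1) * 1) T :=
          (Real.hasDerivAt_negMulLog ht').comp T hB
        convert this using 1
        ring
      have : HasDerivAt (fun T => statement9Phi x T)
          (-Real.log x + (Real.log (1 - T) + 1) +
            (Real.log (x + 2) + (-Real.log (1 + T) - 1))) T := by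
        exact (d1.add d2).add (d3.add d4)
      exact this.deriv
    intro a ha b hb hab
    rw [hderiv a ha, hderiv b hb]
    obtain ⟨hal, har⟩ := ha
    obtain ⟨hbl, hbr⟩ := hb
    have l1 : Real.log (1 - b) < Real.log (1 - a) :=
      Real.log_lt_log (by linarith) (by linarith)
    have l2 : Real.log (1 + a) < Real.log (1 + b) :=
      Real.log_lt_log (by linarith) (by linarith)
    linarith

lemma statement9_key (x : ℝ) (hx : 0 < x) (T1 T2 : ℝ) (h0 : 0 ≤ T1) (h12 : T1 < T2)
    (h21 : T2 < 1) (hz : statement9Phi x T1 = 0) : 0 < statement9Phi x T2 := by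
  have hc := statement9_concave x hx
  set a : ℝ := (1 - T2) / (1 - T1) with ha_def
  set b : ℝ := (T2 - T1) / (1 - T1) with hb_def
  have h11 : T1 < 1 := by linarith
  have ha : 0 < a := div_pos (by linarith) (by linarith)
  have hb : 0 < b := div_pos (by linarith) (by linarith)
  have hne' : (1:ℝ) - T1 ≠ 0 := (show (0:ℝ) < 1 - T1 by linarith).ne'
  have hab : a + b = 1 := by
    rw [ha_def, hb_def, ← add_div]
    rw [show 1 - T2 + (T2 - T1) = 1 - T1 by ring]
    exact div_self hne'
  have hT1mem : T1 ∈ Set.Icc (-(1:ℝ)/2) 1 := ⟨by linarith, by linarith⟩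
  have h1mem : (1:ℝ) ∈ Set.Icc (-(1:ℝ)/2) 1 := ⟨by norm_num, le_refl 1⟩
  have hne : T1 ≠ 1 := by linarith
  have key := hc.2 hT1mem h1mem hne ha hb hab
  have harg : a • T1 + b • (1:ℝ) = T2 := by
    simp only [smul_eq_mul, ha_def, hb_def]
    field_simp
    ring
  rw [harg] at key
  simp only [smul_eq_mul, hz, mul_zero, zero_add] at key
  have := statement9_phi_one x hx
  nlinarith [key, this, hb]

/-- (Part of Lemma 3.1) For `T ∈ [0,1)`, the function
`g_T : ρ ↦ (ρ/(1-T))^{1-T}((ρ+2)/(1+T))^{1+T} - 1` is strictly increasing on `(0,∞)`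
with range `(-1,∞)` and has a unique positive zero `ρ(T)`; moreover `r(T) = 1 + ρ(T)`
is strictly decreasing in `T`, `r(0) = √2`, `r(T) → 1` as `T → 1⁻`, and
`1 < r(T) ≤ √2`. -/
theorem statement_9 (ρ : ℝ → ℝ)
    (hρ : ∀ T ∈ Set.Ico (0 : ℝ) 1, ρ T ∈ Set.Ioi (0 : ℝ) ∧
      (ρ T / (1 - T)) ^ (1 - T) * ((ρ T + 2) / (1 + T)) ^ (1 + T) - 1 = 0) :
    (∀ T ∈ Set.Ico (0 : ℝ) 1,
      StrictMonoOn (fun ρ' : ℝ => (ρ' / (1 - T)) ^ (1 - T) * ((ρ' + 2) / (1 + T)) ^ (1 + T) - 1)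
        (Set.Ioi 0) ∧
      (fun ρ' : ℝ => (ρ' / (1 - T)) ^ (1 - T) * ((ρ' + 2) / (1 + T)) ^ (1 + T) - 1) ''
          Set.Ioi 0 = Set.Ioi (-1) ∧
      (∃! ρ' : ℝ, ρ' ∈ Set.Ioi (0 : ℝ) ∧
        (ρ' / (1 - T)) ^ (1 - T) * ((ρ' + 2) / (1 + T)) ^ (1 + T) - 1 = 0)) ∧
    StrictAntiOn (fun T => 1 + ρ T) (Set.Ico (0 : ℝ) 1) ∧
    1 + ρ 0 = Real.sqrt 2 ∧
    Filter.Tendsto (fun T => 1 + ρ T) (nhdsWithin 1 (Set.Iio 1)) (nhds 1) ∧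
    ∀ T ∈ Set.Ico (0 : ℝ) 1, 1 < 1 + ρ T ∧ 1 + ρ T ≤ Real.sqrt 2 := by
  -- `Φ (ρ T) T = 0` for all `T`.
  have hphi : ∀ T ∈ Set.Ico (0:ℝ) 1, 0 < ρ T ∧ statement9Phi (ρ T) T = 0 := by
    intro T hT
    obtain ⟨hpos, hzero⟩ := hρ T hT
    simp only [Set.mem_Ioi] at hpos
    refine ⟨hpos, ?_⟩
    rw [statement9_exp T (ρ T) hT.2 (by linarith [hT.1]) hpos, sub_eq_zero] at hzero
    rw [← Real.exp_zero] at hzero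
    exact Real.exp_eq_exp.mp hzero
  -- strict antitonicity of `ρ` itself
  have hanti : ∀ T1 ∈ Set.Ico (0:ℝ) 1, ∀ T2 ∈ Set.Ico (0:ℝ) 1, T1 < T2 → ρ T2 < ρ T1 := by
    intro T1 hT1 T2 hT2 h12
    obtain ⟨hx1, hz1⟩ := hphi T1 hT1
    obtain ⟨hx2, hz2⟩ := hphi T2 hT2
    have hk : 0 < statement9Phi (ρ T1) T2 :=
      statement9_key (ρ T1) hx1 T1 T2 hT1.1 h12 hT2.2 hz1
    by_contra h
    push_neg at h
    have := statement9_phi_mono T2 hT2.1 hT2.2 hx1 h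
    rw [hz2] at this
    linarith
  -- value at 0
  have hzero : 1 + ρ 0 = Real.sqrt 2 := by
    obtain ⟨hpos, heq⟩ := hρ 0 ⟨le_refl 0, one_pos⟩
    simp only [Set.mem_Ioi] at hpos
    norm_num at heq
    have h2 : (2:ℝ) = (1 + ρ 0) ^ 2 := by nlinarith
    rw [h2, Real.sqrt_sq (by linarith)]
  refine ⟨?_, ?_, hzero, ?_, ?_⟩
  · -- first bullet: monotonicity, image, existence/uniqueness
    intro T hT
    obtain ⟨hT0, hT1⟩ := hT
    have hs : (0:ℝ) < 1 - T := by linarith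
    have ht : (0:ℝ) < 1 + T := by linarith
    have hmono := statement9_mono T hT0 hT1
    refine ⟨hmono, ?_, ?_⟩
    · -- image
      set g := fun x : ℝ => (x / (1 - T)) ^ (1 - T) * ((x + 2) / (1 + T)) ^ (1 + T) - 1 with hg
      have hcont : Continuous g := statement9_cont T hT0 hT1
      apply Set.Subset.antisymm
      · rintro y ⟨x, hx, rfl⟩
        simp only [Set.mem_Ioi] at hx ⊢
        have := statement9_exp T x hT1 (by linarith) hx
        simp only [hg, this]
        have := Real.exp_pos (statement9Phi x T)
        linarith
      · intro y hy
        simp only [Set.mem_Ioi] at hy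
        -- value at 0 is -1
        have h0v : g 0 = -1 := by
          simp [hg, Real.zero_rpow (ne_of_gt hs)]
        -- find small a with g a < y
        have htend : Tendsto g (nhdsWithin 0 (Set.Ioi 0)) (nhds (-1)) := by
          rw [← h0v]
          exact (hcont.tendsto 0).mono_left nhdsWithin_le_nhds
        have hev : ∀ᶠ x in nhdsWithin 0 (Set.Ioi 0), g x < y :=
          htend.eventually_lt_const hy
        obtain ⟨a, hay, hapos'⟩ := (hev.and self_mem_nhdsWithin).exists
        have hapos : 0 < a := hapos'
        -- find big b with y ≤ g b
        have htop : Tendsto g atTop atTop := by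
          have l1 : Tendsto (fun x : ℝ => (x / (1 - T)) ^ (1 - T)) atTop atTop :=
            (tendsto_rpow_atTop hs).comp (tendsto_id.atTop_div_const hs)
          have l2 : Tendsto (fun x : ℝ => ((x + 2) / (1 + T)) ^ (1 + T)) atTop atTop :=
            (tendsto_rpow_atTop ht).comp
              ((tendsto_atTop_add_const_right _ 2 tendsto_id).atTop_div_const ht)
          have := tendsto_atTop_add_const_right atTop (-1) (l1.atTop_mul_atTop₀ l2)
          simpa [hg, sub_eq_add_neg] using this
        obtain ⟨b, hby, hab⟩ := ((htop.eventually_ge_atTop y).and (eventually_ge_atTop a)).exists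
        -- IVT
        have hivt := intermediate_value_Icc hab hcont.continuousOn
        have hymem : y ∈ Set.Icc (g a) (g b) := ⟨le_of_lt hay, hby⟩
        obtain ⟨x, hxmem, hxy⟩ := hivt hymem
        exact ⟨x, by simp only [Set.mem_Ioi]; linarith [hxmem.1], hxy⟩
    · -- unique zero
      refine ⟨ρ T, hρ T ⟨hT0, hT1⟩, ?_⟩
      rintro y ⟨hy, hyz⟩
      obtain ⟨hx, hxz⟩ := hρ T ⟨hT0, hT1⟩
      exact hmono.injOn hy hx (by rw [hyz, hxz])
  · -- strict antitonicity of r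
    intro T1 hT1 T2 hT2 h12
    have := hanti T1 hT1 T2 hT2 h12
    simpa using this
  · -- tendsto
    rw [tendsto_order]
    have hev01 : ∀ᶠ T in nhdsWithin 1 (Set.Iio 1), T ∈ Set.Ioo (0:ℝ) 1 := by
      have : Set.Ioo (0:ℝ) 1 ∈ nhdsWithin 1 (Set.Iio 1) :=
        mem_nhdsWithin.mpr ⟨Set.Ioi 0, isOpen_Ioi, by norm_num, by
          rintro x ⟨hx1, hx2⟩; exact ⟨hx1, hx2⟩⟩
      exact this
    constructor
    · intro c hc
      filter_upwards [hev01] with T hT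
      have := (hphi T ⟨le_of_lt hT.1, hT.2⟩).1
      show c < 1 + ρ T
      linarith
    · intro c hc
      set ε := c - 1 with hε
      have hεpos : 0 < ε := by rw [hε]; linarith
      -- Φ ε is continuous at 1 with positive value
      have hcont : ContinuousAt (fun T => statement9Phi ε T) 1 := by
        simp only [statement9Phi]
        fun_prop
      have hval : 0 < statement9Phi ε 1 := statement9_phi_one ε hεpos
      have hev : ∀ᶠ T in nhdsWithin 1 (Set.Iio 1), 0 < statement9Phi ε T :=
        ((hcont.tendsto.mono_left nhdsWithin_le_nhds).eventually_const_lt hval)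
      filter_upwards [hev, hev01] with T hΦ hT
      obtain ⟨hTpos, hT1⟩ := hT
      have hmem : T ∈ Set.Ico (0:ℝ) 1 := ⟨le_of_lt hTpos, hT1⟩
      obtain ⟨hx, hz⟩ := hphi T hmem
      -- ρ T < ε
      have : ρ T < ε := by
        by_contra h
        push_neg at h
        have := statement9_phi_mono T hmem.1 hT1 hεpos h
        rw [hz] at this
        linarith
      show 1 + ρ T < c
      linarith
  · -- bounds
    intro T hT
    obtain ⟨hx, _⟩ := hphi T hT
    refine ⟨by linarith, ?_⟩
    rcases eq_or_lt_of_le hT.1 with h | h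
    · subst h
      exact le_of_eq hzero
    · have := hanti 0 ⟨le_refl 0, one_pos⟩ T hT h
      linarith [this, hzero]
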